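/- (Lemma 4, quadratic growth of separable strongly convex composites) For each i = 1,…,N let h_i : ℝ^{m_i} → ℝ be σ_i-strongly convex with σ_i > 0, let A_i be an m_i×n real matrix and b_i ∈ ℝ^{m_i}, and define H(x) = Σ_{i=1}^{N} h_i(A_i x − b_i). Let X = {x ∈ ℝⁿ : Cx ≤ d} be a nonempty polyhedron, let X* be the (nonempty) set of minimizers of H over X, let H* = min_{x∈X} H(x), and fix x* ∈ X*. Let Ã be the matrix obtained by stacking A_1, …, A_N vertically, and suppose θ > 0 is a constant satisfying the Hoffman-type bound dist(x, X*) ≤ θ·‖Ã(x − x*)‖ for every x ∈ X. Then for every x ∈ X: H(x) ≥ H* + (σ/2)·dist²(x, X*), where σ = (min_{1≤i≤N} σ_i)/θ². -/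

import Mathlib

open RealInnerProductSpace

/-- Lemma 4: quadratic growth of separable strongly convex
composites over a polyhedron, given a Hoffman-type error bound.  The norm of
the vertically stacked matrix `Ã` applied to `x − x*` is
`√(∑ i ‖A i (x − x*)‖²)`. -/
theorem quadratic_growth_separable_composite
    (n N q : ℕ) (hN : 0 < N) (m : Fin N → ℕ)
    (h : (i : Fin N) → EuclideanSpace ℝ (Fin (m i)) → ℝ)
    (σ : Fin N → ℝ) (hσ : ∀ i, 0 < σ i)
    (hsc : ∀ i, ConvexOn ℝ Set.univ (fun y => h i y - σ i / 2 * ‖y‖ ^ 2))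
    (A : (i : Fin N) → EuclideanSpace ℝ (Fin n) →ₗ[ℝ] EuclideanSpace ℝ (Fin (m i)))
    (b : (i : Fin N) → EuclideanSpace ℝ (Fin (m i)))
    (C : EuclideanSpace ℝ (Fin n) →ₗ[ℝ] (Fin q → ℝ)) (d : Fin q → ℝ)
    (X : Set (EuclideanSpace ℝ (Fin n)))
    (hX : X = {x | ∀ j, C x j ≤ d j})
    (hXne : X.Nonempty)
    (H : EuclideanSpace ℝ (Fin n) → ℝ)
    (hH : ∀ x, H x = ∑ i, h i (A i x - b i))
    (Xstar : Set (EuclideanSpace ℝ (Fin n)))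
    (hXstar : Xstar = {y | y ∈ X ∧ ∀ z ∈ X, H y ≤ H z})
    (hXstar_ne : Xstar.Nonempty)
    (Hstar : ℝ)
    (hHstar_val : ∀ y ∈ Xstar, H y = Hstar)
    (hHstar_min : ∀ x ∈ X, Hstar ≤ H x)
    (xstar : EuclideanSpace ℝ (Fin n)) (hxstarXstar : xstar ∈ Xstar)
    (θ : ℝ) (hθ : 0 < θ)
    (hHoffman : ∀ x ∈ X,
      Metric.infDist x Xstar ≤ θ * Real.sqrt (∑ i, ‖A i (x - xstar)‖ ^ 2)) :
    ∀ x ∈ X,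
      H x ≥ Hstar +
        ((⨅ i, σ i) / θ ^ 2) / 2 * (Metric.infDist x Xstar) ^ 2 := by

  intro x hx
  haveI : Nonempty (Fin N) := ⟨⟨0, hN⟩⟩
  have hxstarX : xstar ∈ X := by
    rw [hXstar] at hxstarXstar; exact hxstarXstar.1
  have hHxstar : H xstar = Hstar := hHstar_val xstar hxstarXstar
  set T : ℝ := ∑ i, ‖A i (x - xstar)‖ ^ 2 with hT
  have hT0 : 0 ≤ T := Finset.sum_nonneg fun i _ => by positivity
  set S : ℝ := ∑ i, σ i * ‖A i (x - xstar)‖ ^ 2 with hS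
  have hS0 : 0 ≤ S := Finset.sum_nonneg fun i _ => mul_nonneg (hσ i).le (by positivity)
  have hstrong : ∀ i, StrongConvexOn Set.univ (σ i) (h i) := fun i => by
    rw [strongConvexOn_iff_convex]; exact hsc i
  -- key inequality for all t ∈ (0,1]
  have key : ∀ t : ℝ, 0 < t → t ≤ 1 → (1 - t) / 2 * S ≤ H x - Hstar := by
    intro t ht0 ht1
    set z := t • x + (1 - t) • xstar with hz
    have hzX : z ∈ X := by
      rw [hX]; intro j
      have hx' : C x j ≤ d j := by rw [hX] at hx; exact hx j
      have hxs' : C xstar j ≤ d j := by rw [hX] at hxstarX; exact hxstarX j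
      have hCz : C z j = t * C x j + (1 - t) * C xstar j := by
        simp [hz, map_add, map_smul]
      rw [hCz]; nlinarith
    have hterm : ∀ i : Fin N, h i (A i z - b i) ≤
        t * h i (A i x - b i) + (1 - t) * h i (A i xstar - b i)
          - t * (1 - t) * (σ i / 2 * ‖A i (x - xstar)‖ ^ 2) := by
      intro i
      have hcomb : A i z - b i = t • (A i x - b i) + (1 - t) • (A i xstar - b i) := by
        simp only [hz, map_add, map_smul, smul_sub]
        module
      have hdiff : (A i x - b i) - (A i xstar - b i) = A i (x - xstar) := by
        rw [map_sub]; abel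
      have := (hstrong i).2 (Set.mem_univ (A i x - b i)) (Set.mem_univ (A i xstar - b i))
        ht0.le (by linarith : (0:ℝ) ≤ 1 - t) (by ring)
      rw [hdiff] at this
      rw [hcomb]
      simpa [smul_eq_mul, mul_assoc, mul_comm, mul_left_comm] using this
    have hsum : H z ≤ t * H x + (1 - t) * H xstar - t * (1 - t) / 2 * S := by
      rw [hH z, hH x, hH xstar, hS]
      calc ∑ i, h i (A i z - b i)
          ≤ ∑ i, (t * h i (A i x - b i) + (1 - t) * h i (A i xstar - b i)
              - t * (1 - t) * (σ i / 2 * ‖A i (x - xstar)‖ ^ 2)) :=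
            Finset.sum_le_sum fun i _ => hterm i
        _ = t * ∑ i, h i (A i x - b i) + (1 - t) * ∑ i, h i (A i xstar - b i)
              - t * (1 - t) / 2 * ∑ i, σ i * ‖A i (x - xstar)‖ ^ 2 := by
            simp only [Finset.mul_sum, ← Finset.sum_add_distrib, ← Finset.sum_sub_distrib]
            exact Finset.sum_congr rfl fun i _ => by ring
    have hHz : Hstar ≤ H z := hHstar_min z hzX
    have h2 : t * 0 ≤ t * (H x - Hstar - (1 - t) / 2 * S) := by
      rw [hHxstar] at hsum; nlinarith
    have h3 := le_of_mul_le_mul_left h2 ht0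
    linarith
  -- take t → 0
  have hfinal : S / 2 ≤ H x - Hstar := by
    rcases le_or_gt S 0 with hle | hpos
    · have := key 1 one_pos le_rfl; linarith
    · apply le_of_forall_pos_le_add
      intro ε hε
      have htpos : 0 < min 1 (2 * ε / S) := lt_min one_pos (by positivity)
      have hk := key (min 1 (2 * ε / S)) htpos (min_le_left _ _)
      have h4 : min 1 (2 * ε / S) * S ≤ 2 * ε := by
        calc min 1 (2 * ε / S) * S ≤ (2 * ε / S) * S :=
              mul_le_mul_of_nonneg_right (min_le_right _ _) hpos.le
          _ = 2 * ε := div_mul_cancel₀ _ hpos.ne'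
      linarith
  -- combine with Hoffman bound
  have hmin_le : ∀ i, (⨅ j, σ j) ≤ σ i := fun i =>
    ciInf_le (Set.Finite.bddBelow (Set.finite_range σ)) i
  have hmin0 : 0 ≤ ⨅ j, σ j := le_ciInf fun i => (hσ i).le
  have hST : (⨅ j, σ j) * T ≤ S := by
    rw [hS, hT, Finset.mul_sum]
    exact Finset.sum_le_sum fun i _ => mul_le_mul_of_nonneg_right (hmin_le i) (by positivity)
  have hd := hHoffman x hx
  have hd0 : 0 ≤ Metric.infDist x Xstar := Metric.infDist_nonneg
  have hdsq : (Metric.infDist x Xstar) ^ 2 ≤ θ ^ 2 * T := by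
    have hsq : (θ * Real.sqrt T) ^ 2 = θ ^ 2 * T := by
      rw [mul_pow, Real.sq_sqrt hT0]
    nlinarith [Real.sqrt_nonneg T]
  have hmain : ((⨅ j, σ j) / θ ^ 2) / 2 * (Metric.infDist x Xstar) ^ 2 ≤ S / 2 := by
    calc ((⨅ j, σ j) / θ ^ 2) / 2 * (Metric.infDist x Xstar) ^ 2
        ≤ ((⨅ j, σ j) / θ ^ 2) / 2 * (θ ^ 2 * T) :=
          mul_le_mul_of_nonneg_left hdsq (by positivity)
      _ = (⨅ j, σ j) * T / 2 := by field_simp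
      _ ≤ S / 2 := by linarith
  linarith
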